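/- arXiv:2503.01712 — 2 statements merged into one kernel-verified Lean document; each statement's English description precedes it below -/
import Mathlib

section
/- Two-sided operator bound for the normalization defect of the zeroth Kraus operator: let Q be a positive semidefinite Hermitian d×d complex matrix and Δt ≥ 0; set S = I + (Δt²/4)Q² and let S^{−1/2} be the inverse of its positive definite square root. Then, in the Loewner order, −(Δt²/4)·Q² ≤ (I − (Δt/2)Q)·(I − S^{−1/2}) ≤ (Δt²/4)·Q². -/
open Matrix
open scoped ComplexOrder

/-- The positive semidefinite square root of a matrix (defined to be `0` if the matrix is not
positive semidefinite). -/
noncomputable def matSqrt {d : ℕ} (A : Matrix (Fin d) (Fin d) ℂ) : Matrix (Fin d) (Fin d) ℂ :=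
  open scoped Classical in
  if h : A.PosSemidef then (h.1.eigenvectorUnitary : Matrix (Fin d) (Fin d) ℂ) *
    diagonal ((↑) ∘ (√·) ∘ h.1.eigenvalues) * (star (h.1.eigenvectorUnitary : Matrix (Fin d) (Fin d) ℂ))
  else 0

namespace MyAux

variable {n : Type*} [Fintype n] [DecidableEq n] {A : Matrix n n ℂ} (hA : A.IsHermitian)

private lemma assoc6 (a b c d e f : Matrix n n ℂ) :
    (a * b * c) * (d * e * f) = a * (b * (c * d) * e) * f := by
  simp only [mul_assoc]

lemma mycfc_mul (f g : ℝ → ℝ) :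
    hA.cfc f * hA.cfc g = hA.cfc (fun x => f x * g x) := by
  simp only [Matrix.IsHermitian.cfc, Unitary.conjStarAlgAut_apply]
  rw [assoc6,
    show (star (hA.eigenvectorUnitary : Matrix n n ℂ)) * (hA.eigenvectorUnitary : Matrix n n ℂ)
      = 1 from Unitary.star_mul_self_of_mem (SetLike.coe_mem _), mul_one, diagonal_mul_diagonal]
  refine congrArg (· * _) (congrArg _ (diagonal_eq_diagonal_iff.mpr fun i => by simp))

lemma mycfc_add (f g : ℝ → ℝ) :
    hA.cfc f + hA.cfc g = hA.cfc (fun x => f x + g x) := by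
  simp only [Matrix.IsHermitian.cfc, Unitary.conjStarAlgAut_apply]
  rw [← add_mul, ← mul_add]
  refine congrArg (· * _) (congrArg _ ?_)
  rw [diagonal_add]
  exact diagonal_eq_diagonal_iff.mpr fun i => by simp

lemma mycfc_one : hA.cfc (fun _ => 1) = 1 := by
  simp only [Matrix.IsHermitian.cfc, Unitary.conjStarAlgAut_apply]
  have : diagonal (RCLike.ofReal ∘ (fun _ => (1:ℝ)) ∘ hA.eigenvalues) = (1 : Matrix n n ℂ) := by
    simp [Function.comp_def, diagonal_one]
  rw [this, mul_one]
  exact Unitary.mul_star_self_of_mem (SetLike.coe_mem _)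

lemma mycfc_id : hA.cfc (fun x => x) = A := (hA.spectral_theorem).symm

lemma mycfc_smul (r : ℝ) (f : ℝ → ℝ) :
    hA.cfc (fun x => r * f x) = (r : ℂ) • hA.cfc f := by
  simp only [Matrix.IsHermitian.cfc, Unitary.conjStarAlgAut_apply]
  rw [show ((r:ℂ) • ((hA.eigenvectorUnitary : Matrix n n ℂ) *
        diagonal (RCLike.ofReal ∘ f ∘ hA.eigenvalues) * star (hA.eigenvectorUnitary : Matrix n n ℂ)))
      = (hA.eigenvectorUnitary : Matrix n n ℂ) *
        ((r:ℂ) • diagonal (RCLike.ofReal ∘ f ∘ hA.eigenvalues)) *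
        star (hA.eigenvectorUnitary : Matrix n n ℂ) by
    rw [Matrix.mul_smul, Matrix.smul_mul]]
  refine congrArg (· * _) (congrArg _ ?_)
  rw [← Matrix.diagonal_smul]
  exact diagonal_eq_diagonal_iff.mpr fun i => by simp [Complex.real_smul]

lemma mycfc_posSemidef (f : ℝ → ℝ) (hf : ∀ i, 0 ≤ f (hA.eigenvalues i)) :
    (hA.cfc f).PosSemidef := by
  simp only [Matrix.IsHermitian.cfc, Unitary.conjStarAlgAut_apply]
  rw [star_eq_conjTranspose]
  apply Matrix.PosSemidef.mul_mul_conjTranspose_same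
  refine posSemidef_diagonal_iff.mpr fun i => ?_
  rw [Function.comp_apply, Function.comp_apply, RCLike.nonneg_iff]
  simp [hf i]

end MyAux

namespace MyAux
variable {n : Type*} [Fintype n] [DecidableEq n] {A : Matrix n n ℂ} (hA : A.IsHermitian)

lemma mycfc_neg (f : ℝ → ℝ) : -hA.cfc f = hA.cfc (fun x => -f x) := by
  have h := mycfc_smul hA (-1) f
  simp only [neg_one_mul] at h
  rw [h]
  norm_num

lemma mycfc_sub (f g : ℝ → ℝ) :
    hA.cfc f - hA.cfc g = hA.cfc (fun x => f x - g x) := by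
  rw [sub_eq_add_neg, mycfc_neg, mycfc_add]
  simp only [← sub_eq_add_neg]

end MyAux

lemma scal (y : ℝ) (hy : 0 ≤ y) :
    |(1 - y) * (1 - (Real.sqrt (1 + y ^ 2))⁻¹)| ≤ y ^ 2 := by
  set r := Real.sqrt (1 + y ^ 2) with hr
  have hr1 : 1 ≤ r := Real.one_le_sqrt.mpr (by nlinarith)
  have hrpos : 0 < r := lt_of_lt_of_le one_pos hr1
  have hr2 : r ^ 2 = 1 + y ^ 2 := Real.sq_sqrt (by nlinarith)
  have hinv : r * r⁻¹ = 1 := mul_inv_cancel₀ hrpos.ne'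
  have hinvle : r⁻¹ ≤ 1 := by
    rw [inv_le_one_iff₀]; right; exact hr1
  have hinvpos : 0 < r⁻¹ := inv_pos.mpr hrpos
  rw [abs_le]
  constructor
  · nlinarith [sq_nonneg (y - 1), sq_nonneg (r - 1), mul_pos hrpos hinvpos]
  · nlinarith [sq_nonneg (y - 1), sq_nonneg (r - 1), mul_pos hrpos hinvpos]


open MyAux in
/-- Two-sided operator bound for the normalization defect of the zeroth Kraus operator: for `Q`
positive semidefinite and `S = I + (Δt²/4)Q²`, in the Loewner order
`−(Δt²/4) Q² ≤ (I − (Δt/2)Q)(I − S^{−1/2}) ≤ (Δt²/4) Q²`. -/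
theorem stmt14 {d : ℕ} (Q : Matrix (Fin d) (Fin d) ℂ) (hQ : Q.PosSemidef)
    (Δt : ℝ) (hΔt : 0 ≤ Δt)
    (B : Matrix (Fin d) (Fin d) ℂ)
    (hB : B = (1 - ((Δt / 2 : ℝ) : ℂ) • Q) *
        (1 - (matSqrt (1 + ((Δt ^ 2 / 4 : ℝ) : ℂ) • Q ^ 2))⁻¹)) :
    (((Δt ^ 2 / 4 : ℝ) : ℂ) • Q ^ 2 - B).PosSemidef
    ∧ (B - (-(((Δt ^ 2 / 4 : ℝ) : ℂ) • Q ^ 2))).PosSemidef := by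
  set t : ℝ := Δt / 2 with ht
  set c : ℝ := Δt ^ 2 / 4 with hcdef
  have hc : c = t ^ 2 := by rw [ht, hcdef]; ring
  have hcnn : 0 ≤ c := by rw [hc]; exact sq_nonneg t
  have htnn : 0 ≤ t := by positivity
  have hH := hQ.1
  -- basic cfc identities
  have hQ2 : hH.cfc (fun x => x * x) = Q ^ 2 := by
    rw [← mycfc_mul, mycfc_id, pow_two]
  have hcQ2 : (c : ℂ) • Q ^ 2 = hH.cfc (fun x => c * (x * x)) := by
    rw [mycfc_smul, hQ2]
  have hS_eq : (1 : Matrix (Fin d) (Fin d) ℂ) + (c : ℂ) • Q ^ 2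
      = hH.cfc (fun x => 1 + c * (x * x)) := by
    rw [hcQ2, ← mycfc_add, mycfc_one]
  have hSpos : ∀ x : ℝ, (0:ℝ) < 1 + c * (x * x) := fun x => by
    have := mul_nonneg hcnn (mul_self_nonneg x); linarith
  have hSpsd : ((1 : Matrix (Fin d) (Fin d) ℂ) + (c : ℂ) • Q ^ 2).PosSemidef := by
    rw [hS_eq]
    exact mycfc_posSemidef hH _ fun i => (hSpos _).le
  have hsqrtpos : ∀ x : ℝ, (0:ℝ) < Real.sqrt (1 + c * (x * x)) :=
    fun x => Real.sqrt_pos.mpr (hSpos x)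
  have hsqrt : matSqrt ((1 : Matrix (Fin d) (Fin d) ℂ) + (c : ℂ) • Q ^ 2)
      = hH.cfc (fun x => Real.sqrt (1 + c * (x * x))) := by
    open scoped MatrixOrder in
    have h1 : CFC.sqrt ((1 : Matrix (Fin d) (Fin d) ℂ) + (c : ℂ) • Q ^ 2)
        = matSqrt ((1 : Matrix (Fin d) (Fin d) ℂ) + (c : ℂ) • Q ^ 2) := by
      rw [CFC.sqrt_eq_real_sqrt _ hSpsd.nonneg, cfcₙ_eq_cfc, hSpsd.1.cfc_eq, matSqrt, dif_pos hSpsd]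
      rfl
    open scoped MatrixOrder in
    have h2 : CFC.sqrt ((1 : Matrix (Fin d) (Fin d) ℂ) + (c : ℂ) • Q ^ 2)
        = hH.cfc (fun x => Real.sqrt (1 + c * (x * x))) := by
      refine CFC.sqrt_unique ?_ (mycfc_posSemidef hH (fun x => Real.sqrt (1 + c * (x * x)))
        fun i => Real.sqrt_nonneg _).nonneg
      rw [mycfc_mul, hS_eq]
      exact congrArg hH.cfc (funext fun x => Real.mul_self_sqrt (hSpos x).le)
    rw [← h1, h2]
  have hmatSqrt : matSqrt ((1 : Matrix (Fin d) (Fin d) ℂ) + (c : ℂ) • Q ^ 2)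
      = hH.cfc (fun x => Real.sqrt (1 + c * (x * x))) := by
    exact hsqrt
  have hinv : (hH.cfc (fun x => Real.sqrt (1 + c * (x * x))))⁻¹
      = hH.cfc (fun x => (Real.sqrt (1 + c * (x * x)))⁻¹) := by
    apply Matrix.inv_eq_right_inv
    rw [mycfc_mul]
    rw [show (fun x => Real.sqrt (1 + c * (x * x)) * (Real.sqrt (1 + c * (x * x)))⁻¹)
        = fun _ : ℝ => (1:ℝ) from funext fun x => mul_inv_cancel₀ (hsqrtpos x).ne']
    exact mycfc_one hH
  have hB' : B = hH.cfc (fun x => (1 - t * x) * (1 - (Real.sqrt (1 + c * (x * x)))⁻¹)) := by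
    rw [hB, hmatSqrt, hinv]
    have h1 : (1 : Matrix (Fin d) (Fin d) ℂ) - (t : ℂ) • Q = hH.cfc (fun x => 1 - t * x) := by
      rw [show (t : ℂ) • Q = hH.cfc (fun x => t * x) by rw [mycfc_smul, mycfc_id],
        ← mycfc_sub, mycfc_one]
    have h2 : (1 : Matrix (Fin d) (Fin d) ℂ) - hH.cfc (fun x => (Real.sqrt (1 + c * (x * x)))⁻¹)
        = hH.cfc (fun x => 1 - (Real.sqrt (1 + c * (x * x)))⁻¹) := by
      rw [← mycfc_sub, mycfc_one]
    rw [h1, h2, mycfc_mul]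
  -- scalar bound at eigenvalues
  have key : ∀ i, |(1 - t * hQ.1.eigenvalues i) *
      (1 - (Real.sqrt (1 + c * (hQ.1.eigenvalues i * hQ.1.eigenvalues i)))⁻¹)|
      ≤ c * (hQ.1.eigenvalues i * hQ.1.eigenvalues i) := by
    intro i
    have hev : 0 ≤ hQ.1.eigenvalues i := hQ.eigenvalues_nonneg i
    have := scal (t * hQ.1.eigenvalues i) (mul_nonneg htnn hev)
    have he1 : 1 + (t * hQ.1.eigenvalues i) ^ 2
        = 1 + c * (hQ.1.eigenvalues i * hQ.1.eigenvalues i) := by rw [hc]; ring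
    have he2 : (t * hQ.1.eigenvalues i) ^ 2
        = c * (hQ.1.eigenvalues i * hQ.1.eigenvalues i) := by rw [hc]; ring
    rw [he1, he2] at this
    exact this
  constructor
  · rw [hcQ2, hB', mycfc_sub]
    refine mycfc_posSemidef hH _ fun i => ?_
    have := (abs_le.mp (key i)).2
    linarith
  · rw [sub_neg_eq_add, hcQ2, hB', mycfc_add]
    refine mycfc_posSemidef hH _ fun i => ?_
    have := (abs_le.mp (key i)).1
    linarith
end

section
/- Fourth-order operator bound for the normalization defect of the jump Kraus operators: let Q be a positive semidefinite Hermitian d×d complex matrix and Δt ≥ 0; set S = I + (Δt²/4)Q² and let S^{−1/2} be the inverse of its positive definite square root. Then, in the Loewner order, 0 ≤ Δt·(I − S^{−1/2})·Q·(I − S^{−1/2}) ≤ (Δt⁴/16)·Q⁴. -/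
open Matrix
open scoped ComplexOrder

section Aux

variable {d : ℕ} (V : Matrix (Fin d) (Fin d) ℂ)

/-- Conjugation of a real diagonal by a fixed matrix. -/
noncomputable def conjD (g : Fin d → ℝ) : Matrix (Fin d) (Fin d) ℂ :=
  V * Matrix.diagonal (fun i => (g i : ℂ)) * Vᴴ

lemma diagC_mul (g h : Fin d → ℝ) :
    Matrix.diagonal (fun i => (g i : ℂ)) * Matrix.diagonal (fun i => (h i : ℂ)) =
      Matrix.diagonal (fun i => ((g * h) i : ℂ)) := by
  rw [Matrix.diagonal_mul_diagonal]
  congr 1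
  funext i
  push_cast
  simp

lemma conjD_mul (h2 : Vᴴ * V = 1) (g h : Fin d → ℝ) :
    conjD V g * conjD V h = conjD V (g * h) := by
  simp only [conjD, Matrix.mul_assoc]
  rw [← Matrix.mul_assoc Vᴴ V, h2, Matrix.one_mul,
    ← Matrix.mul_assoc (Matrix.diagonal _) (Matrix.diagonal _), diagC_mul]

lemma conjD_one (h1 : V * Vᴴ = 1) : conjD V 1 = 1 := by
  have : Matrix.diagonal (fun i : Fin d => (((1 : Fin d → ℝ)) i : ℂ)) = 1 := by
    simp
  rw [conjD, this, Matrix.mul_one, h1]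

lemma conjD_add (g h : Fin d → ℝ) : conjD V g + conjD V h = conjD V (g + h) := by
  simp only [conjD, ← Matrix.add_mul, ← Matrix.mul_add, Matrix.diagonal_add]
  congr
  funext i
  push_cast
  simp

lemma conjD_sub (g h : Fin d → ℝ) : conjD V g - conjD V h = conjD V (g - h) := by
  simp only [conjD, ← Matrix.sub_mul, ← Matrix.mul_sub, Matrix.diagonal_sub]
  congr
  funext i
  push_cast
  simp

lemma conjD_smul (r : ℝ) (g : Fin d → ℝ) :
    (r : ℂ) • conjD V g = conjD V (r • g) := by
  have hdiag : Matrix.diagonal (fun i => (((r • g) i : ℝ) : ℂ)) =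
      (r : ℂ) • Matrix.diagonal (fun i => ((g i : ℝ) : ℂ)) := by
    ext i j
    by_cases h : i = j
    · subst h
      simp
    · simp [Matrix.diagonal_apply_ne _ h]
  rw [conjD, conjD, hdiag, ← Matrix.smul_mul, ← Matrix.mul_smul]

lemma conjD_pow (h1 : V * Vᴴ = 1) (h2 : Vᴴ * V = 1) (g : Fin d → ℝ) (n : ℕ) :
    conjD V g ^ n = conjD V (g ^ n) := by
  induction n with
  | zero => simpa using (conjD_one V h1).symm
  | succ n ih => rw [pow_succ, pow_succ, ih, conjD_mul V h2]

lemma conjD_posSemidef (g : Fin d → ℝ) (hg : ∀ i, 0 ≤ g i) : (conjD V g).PosSemidef := by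
  have hd : Matrix.PosSemidef (Matrix.diagonal (fun i => (g i : ℂ))) :=
    Matrix.PosSemidef.diagonal (fun i => Complex.zero_le_real.mpr (hg i))
  exact hd.mul_mul_conjTranspose_same V

lemma conjD_inv (h1 : V * Vᴴ = 1) (h2 : Vᴴ * V = 1) (g : Fin d → ℝ) (hg : ∀ i, g i ≠ 0) :
    (conjD V g)⁻¹ = conjD V g⁻¹ := by
  apply Matrix.inv_eq_right_inv
  rw [conjD_mul V h2]
  have : g * g⁻¹ = 1 := by
    funext i
    exact mul_inv_cancel₀ (hg i)
  rw [this, conjD_one V h1]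

end Aux

/-- scalar core inequality -/
lemma scalar_core (x u : ℝ) (hx : 0 ≤ x) (hu0 : 0 < u) (hu1 : u ≤ 1)
    (key : u ^ 2 * (1 + x ^ 2) = 1) : 2 * x * (1 - u) ^ 2 ≤ x ^ 4 := by
  have h1 : (1 - u) * (1 + u) = u ^ 2 * x ^ 2 := by nlinarith [key]
  have h2 : (1 - u) ^ 2 ≤ u ^ 4 * x ^ 4 := by nlinarith [h1, sq_nonneg (1 - u), hu0.le, hu1]
  have k2 : (u ^ 2 * (1 + x ^ 2)) ^ 2 = 1 := by rw [key]; norm_num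
  have h3 : 2 * x * u ^ 4 ≤ 1 := by nlinarith [k2, sq_nonneg (x - 1), sq_nonneg x, pow_nonneg hu0.le 4, sq_nonneg (1 + x^2)]
  calc 2 * x * (1 - u) ^ 2 ≤ 2 * x * (u ^ 4 * x ^ 4) := by
        apply mul_le_mul_of_nonneg_left h2 (by positivity)
    _ = (2 * x * u ^ 4) * x ^ 4 := by ring
    _ ≤ 1 * x ^ 4 := mul_le_mul_of_nonneg_right h3 (by positivity)
    _ = x ^ 4 := by ring

lemma scalar_bound (Δt q : ℝ) (hΔt : 0 ≤ Δt) (hq : 0 ≤ q) :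
    Δt * ((1 - (Real.sqrt (1 + Δt ^ 2 / 4 * q ^ 2))⁻¹) * q *
        (1 - (Real.sqrt (1 + Δt ^ 2 / 4 * q ^ 2))⁻¹)) ≤ Δt ^ 4 / 16 * q ^ 4 := by
  set x : ℝ := Δt * q / 2 with hxdef
  have hx : 0 ≤ x := by positivity
  have hs : 1 + Δt ^ 2 / 4 * q ^ 2 = 1 + x ^ 2 := by rw [hxdef]; ring
  set t : ℝ := Real.sqrt (1 + Δt ^ 2 / 4 * q ^ 2) with htdef
  have ht1 : 1 ≤ t := by
    rw [htdef, hs]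
    have := Real.sqrt_le_sqrt (show (1:ℝ) ≤ 1 + x ^ 2 by nlinarith [sq_nonneg x])
    simpa using this
  have ht0 : 0 < t := lt_of_lt_of_le one_pos ht1
  have ht2 : t ^ 2 = 1 + x ^ 2 := by
    rw [htdef, hs, Real.sq_sqrt (by positivity)]
  set u : ℝ := t⁻¹ with hudef
  have hu0 : 0 < u := by positivity
  have hu1 : u ≤ 1 := by
    rw [hudef]
    exact inv_le_one_of_one_le₀ ht1
  have key : u ^ 2 * (1 + x ^ 2) = 1 := by
    rw [hudef, ← ht2]
    field_simp
  have main := scalar_core x u hx hu0 hu1 key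
  have e1 : Δt * ((1 - u) * q * (1 - u)) = 2 * x * (1 - u) ^ 2 := by rw [hxdef]; ring
  have e2 : x ^ 4 = Δt ^ 4 / 16 * q ^ 4 := by rw [hxdef]; ring
  linarith [e1 ▸ e2 ▸ main]

/-- Fourth-order operator bound for the normalization defect of the jump Kraus operators: for
`Q` positive semidefinite and `S = I + (Δt²/4)Q²`, in the Loewner order
`0 ≤ Δt (I − S^{−1/2}) Q (I − S^{−1/2}) ≤ (Δt⁴/16) Q⁴`. -/
theorem stmt15 {d : ℕ} (Q : Matrix (Fin d) (Fin d) ℂ) (hQ : Q.PosSemidef)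
    (Δt : ℝ) (hΔt : 0 ≤ Δt)
    (B : Matrix (Fin d) (Fin d) ℂ)
    (hB : B = (Δt : ℂ) • ((1 - (matSqrt (1 + ((Δt ^ 2 / 4 : ℝ) : ℂ) • Q ^ 2))⁻¹) * Q *
        (1 - (matSqrt (1 + ((Δt ^ 2 / 4 : ℝ) : ℂ) • Q ^ 2))⁻¹))) :
    B.PosSemidef ∧ (((Δt ^ 4 / 16 : ℝ) : ℂ) • Q ^ 4 - B).PosSemidef := by
  have hH : Q.IsHermitian := hQ.1
  set V : Matrix (Fin d) (Fin d) ℂ := (hH.eigenvectorUnitary : Matrix (Fin d) (Fin d) ℂ) with hVdef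
  have h1 : V * Vᴴ = 1 := by
    rw [← Matrix.star_eq_conjTranspose]
    exact Matrix.mem_unitaryGroup_iff.mp hH.eigenvectorUnitary.2
  have h2 : Vᴴ * V = 1 := by
    rw [← Matrix.star_eq_conjTranspose]
    exact Matrix.mem_unitaryGroup_iff'.mp hH.eigenvectorUnitary.2
  set ev : Fin d → ℝ := hH.eigenvalues with hevdef
  have hev : ∀ i, 0 ≤ ev i := fun i => hQ.eigenvalues_nonneg i
  have hQeq : Q = conjD V ev := by
    rw [conjD]
    have := hH.spectral_theorem
    rw [Unitary.conjStarAlgAut_apply, Matrix.star_eq_conjTranspose] at this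
    exact this
  -- the relevant functions
  set f : Fin d → ℝ := fun i => 1 + Δt ^ 2 / 4 * ev i ^ 2 with hfdef
  have hf1 : ∀ i, 1 ≤ f i := fun i => by
    simp only [hfdef]; nlinarith [sq_nonneg (ev i)]
  have hf0 : ∀ i, 0 ≤ f i := fun i => le_trans zero_le_one (hf1 i)
  set sf : Fin d → ℝ := fun i => Real.sqrt (f i) with hsfdef
  have hsf1 : ∀ i, 1 ≤ sf i := fun i => by
    simp only [hsfdef]
    have := Real.sqrt_le_sqrt (hf1 i)
    simpa using this
  have hsfne : ∀ i, sf i ≠ 0 := fun i => by positivity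
  -- S = conjD V f
  have hfe : (1 : Fin d → ℝ) + (Δt ^ 2 / 4) • ev ^ 2 = f := by
    funext i
    simp [hfdef]
  have hS : (1 : Matrix (Fin d) (Fin d) ℂ) + ((Δt ^ 2 / 4 : ℝ) : ℂ) • Q ^ 2 = conjD V f := by
    rw [hQeq, conjD_pow V h1 h2, conjD_smul, ← conjD_one V h1, conjD_add, hfe]
  have hSpsd : ((1 : Matrix (Fin d) (Fin d) ℂ) + ((Δt ^ 2 / 4 : ℝ) : ℂ) • Q ^ 2).PosSemidef := by
    rw [hS]; exact conjD_posSemidef V f hf0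
  -- matSqrt S = conjD V sf
  have hTpsd : (conjD V sf).PosSemidef :=
    conjD_posSemidef V sf (fun i => Real.sqrt_nonneg _)
  have hTsq : (conjD V sf) ^ 2 = (1 : Matrix (Fin d) (Fin d) ℂ) + ((Δt ^ 2 / 4 : ℝ) : ℂ) • Q ^ 2 := by
    have hsq : sf ^ 2 = f := by
      funext i
      simp only [Pi.pow_apply, hsfdef]
      exact Real.sq_sqrt (hf0 i)
    rw [conjD_pow V h1 h2, hsq, hS]
  have hsqrt : matSqrt (1 + ((Δt ^ 2 / 4 : ℝ) : ℂ) • Q ^ 2) = conjD V sf := by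
    rw [matSqrt, dif_pos hSpsd]
    open scoped MatrixOrder in
    have e1 := hSpsd.1.cfc_eq Real.sqrt
    rw [Matrix.IsHermitian.cfc, Unitary.conjStarAlgAut_apply] at e1
    refine e1.symm.trans ?_
    rw [← cfcₙ_eq_cfc (hf := Real.continuous_sqrt.continuousOn) (hf0 := Real.sqrt_zero), ← CFC.sqrt_eq_real_sqrt _ hSpsd.nonneg]
    exact CFC.sqrt_unique (by rw [← sq]; exact hTsq) hTpsd.nonneg
  have hinv : (matSqrt (1 + ((Δt ^ 2 / 4 : ℝ) : ℂ) • Q ^ 2))⁻¹ = conjD V sf⁻¹ := by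
    rw [hsqrt]
    exact conjD_inv V h1 h2 sf hsfne
  -- B = conjD V b
  set b : Fin d → ℝ := Δt • (((1 : Fin d → ℝ) - sf⁻¹) * ev * ((1 : Fin d → ℝ) - sf⁻¹)) with hbdef
  have hBeq : B = conjD V b := by
    rw [hB, hinv, hQeq, ← conjD_one V h1, conjD_sub, conjD_mul V h2, conjD_mul V h2,
      conjD_smul, hbdef]
  have hb_apply : ∀ i, b i = Δt * ((1 - (Real.sqrt (f i))⁻¹) * ev i * (1 - (Real.sqrt (f i))⁻¹)) := by
    intro i
    simp [hbdef, hsfdef]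
  have hb0 : ∀ i, 0 ≤ b i := by
    intro i
    rw [hb_apply i]
    have : (1 - (Real.sqrt (f i))⁻¹) * ev i * (1 - (Real.sqrt (f i))⁻¹)
        = ev i * (1 - (Real.sqrt (f i))⁻¹) ^ 2 := by ring
    rw [this]
    have := hev i
    positivity
  constructor
  · rw [hBeq]; exact conjD_posSemidef V b hb0
  · have hdiff : ((Δt ^ 4 / 16 : ℝ) : ℂ) • Q ^ 4 - B = conjD V ((Δt ^ 4 / 16) • ev ^ 4 - b) := by
      rw [hBeq, hQeq, conjD_pow V h1 h2, conjD_smul, conjD_sub]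
    rw [hdiff]
    apply conjD_posSemidef
    intro i
    have hle : b i ≤ Δt ^ 4 / 16 * ev i ^ 4 := by
      rw [hb_apply i]
      simpa [hfdef] using scalar_bound Δt (ev i) hΔt (hev i)
    simp only [Pi.sub_apply, Pi.smul_apply, Pi.pow_apply, smul_eq_mul, sub_nonneg]
    exact hle
end
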